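/- The homogeneous cubic polynomial P = x_1^3 + 3·x_2^3 + x_0^2·x_2 − x_0·x_1^2 + x_1·x_2^2 + x_0·x_1·x_2 is irreducible in the polynomial ring ℂ[x_0, x_1, x_2]. -/

import Mathlib

open MvPolynomial

section Aux

/-- The dehomogenized discriminant `t⁴ - 6t³ + t² - 4t - 12` is not a square in `ℂ[t]`,
since it is squarefree (coprime to its derivative) of positive degree. -/
lemma aux_f_not_sq (q : Polynomial ℂ) :
    q * q ≠ Polynomial.X ^ 4 - 6 * Polynomial.X ^ 3 + Polynomial.X ^ 2
      - 4 * Polynomial.X - 12 := by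
  intro hq
  set f : Polynomial ℂ := Polynomial.X ^ 4 - 6 * Polynomial.X ^ 3 + Polynomial.X ^ 2
      - 4 * Polynomial.X - 12 with hf
  have hcop : IsCoprime f (Polynomial.derivative f) := by
    have hder : Polynomial.derivative f
        = 4 * Polynomial.X ^ 3 - 18 * Polynomial.X ^ 2 + 2 * Polynomial.X - 4 := by
      simp only [hf, Polynomial.derivative_sub, Polynomial.derivative_add,
        Polynomial.derivative_mul, Polynomial.derivative_X_pow, Polynomial.derivative_ofNat,
        Polynomial.derivative_X, Polynomial.derivative_C, map_ofNat, Polynomial.C_eq_natCast]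
      ring
    refine ⟨Polynomial.C (25088⁻¹ : ℂ) * (-2054 + 442 * Polynomial.X - 4 * Polynomial.X ^ 2),
      Polynomial.C (25088⁻¹ : ℂ)
        * (Polynomial.X ^ 3 - 112 * Polynomial.X ^ 2 + 673 * Polynomial.X - 110), ?_⟩
    rw [hder]
    have h1 : (-2054 + 442 * Polynomial.X - 4 * Polynomial.X ^ 2) * f
        + (Polynomial.X ^ 3 - 112 * Polynomial.X ^ 2 + 673 * Polynomial.X - 110)
          * (4 * Polynomial.X ^ 3 - 18 * Polynomial.X ^ 2 + 2 * Polynomial.X - 4)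
        = (25088 : Polynomial ℂ) := by
      rw [hf]; ring
    calc Polynomial.C (25088⁻¹ : ℂ) * (-2054 + 442 * Polynomial.X - 4 * Polynomial.X ^ 2) * f +
          Polynomial.C (25088⁻¹ : ℂ)
            * (Polynomial.X ^ 3 - 112 * Polynomial.X ^ 2 + 673 * Polynomial.X - 110) *
            (4 * Polynomial.X ^ 3 - 18 * Polynomial.X ^ 2 + 2 * Polynomial.X - 4)
        = Polynomial.C (25088⁻¹ : ℂ)
          * ((-2054 + 442 * Polynomial.X - 4 * Polynomial.X ^ 2) * f
          + (Polynomial.X ^ 3 - 112 * Polynomial.X ^ 2 + 673 * Polynomial.X - 110)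
            * (4 * Polynomial.X ^ 3 - 18 * Polynomial.X ^ 2 + 2 * Polynomial.X - 4)) := by
          ring
      _ = 1 := by
          rw [h1]
          rw [show (25088 : Polynomial ℂ) = Polynomial.C (25088 : ℂ) from
            (map_ofNat Polynomial.C 25088).symm]
          rw [← Polynomial.C_mul]
          norm_num
  have hqf : q ∣ f := ⟨q, hq.symm⟩
  have hqf' : q ∣ Polynomial.derivative f := by
    rw [← hq, Polynomial.derivative_mul]
    exact ⟨Polynomial.derivative q + Polynomial.derivative q, by ring⟩
  have hu : IsUnit q := hcop.isUnit_of_dvd' hqf hqf'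
  obtain ⟨c, hc⟩ := Polynomial.isUnit_iff.mp hu
  have h0 := congrArg (Polynomial.eval 0) hq
  have h1 := congrArg (Polynomial.eval 1) hq
  rw [← hc.2] at h0 h1
  simp [hf] at h0 h1
  rw [h0] at h1
  norm_num at h1

noncomputable abbrev SS := MvPolynomial (Fin 2) ℂ

noncomputable def ψ : SS →ₐ[ℂ] Polynomial ℂ := aeval ![Polynomial.X, 1]

/-- The discriminant quartic is not a square in `ℂ[y₀, y₁]`. -/
lemma aux_D_not_sq (t : SS) :
    t * t ≠ X 0 ^ 4 - 6 * X 0 ^ 3 * X 1 + X 0 ^ 2 * X 1 ^ 2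
      - 4 * X 0 * X 1 ^ 3 - 12 * X 1 ^ 4 := by
  intro ht
  apply aux_f_not_sq (ψ t)
  have := congrArg ψ ht
  rw [map_mul] at this
  rw [this]
  simp only [ψ, map_add, map_sub, map_mul, map_pow, map_ofNat, aeval_X]
  norm_num [Matrix.cons_val_zero, Matrix.cons_val_one]

lemma prime_X0 : Prime (X 0 : SS) := by
  have h := (MulEquiv.prime_iff (MvPolynomial.finSuccEquiv ℂ 1).toMulEquiv (p := (X 0 : SS))).symm
  rw [h]
  simpa [finSuccEquiv_X_zero] using Polynomial.prime_X (R := MvPolynomial (Fin 1) ℂ)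

lemma prime_X1 : Prime (X 1 : SS) := by
  have h := (MulEquiv.prime_iff (MvPolynomial.renameEquiv ℂ (Equiv.swap (0 : Fin 2) 1)).toMulEquiv
    (p := (X 0 : SS))).symm
  have h2 : (renameEquiv ℂ (Equiv.swap (0 : Fin 2) 1)).toMulEquiv (X 0) = (X 1 : SS) := by
    show (renameEquiv ℂ (Equiv.swap (0 : Fin 2) 1)) (X 0) = (X 1 : SS)
    simp [renameEquiv_apply, rename_X]
  rw [h2] at h
  exact h.mp prime_X0

noncomputable abbrev pa : SS := X 1
noncomputable abbrev pb : SS := X 0 * X 1 - X 0 ^ 2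
noncomputable abbrev pc : SS := X 0 ^ 3 + 3 * X 1 ^ 3 + X 0 * X 1 ^ 2

/-- The cubic, viewed as a quadratic in `x₀` over `ℂ[x₁, x₂]`. -/
noncomputable abbrev pq : Polynomial SS :=
  Polynomial.C pa * Polynomial.X ^ 2 + Polynomial.C pb * Polynomial.X + Polynomial.C pc

instance : Nonempty (GCDMonoid SS) := ⟨UniqueFactorizationMonoid.toGCDMonoid SS⟩

lemma pq_primitive : pq.IsPrimitive := by
  intro r hr
  obtain ⟨g, hg⟩ := hr
  have key : ∀ n, pq.coeff n = r * g.coeff n := by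
    intro n
    rw [hg, Polynomial.coeff_C_mul]
  have hc2 : r ∣ pa := by
    have := key 2
    simp only [Polynomial.coeff_add, Polynomial.coeff_C_mul, Polynomial.coeff_X_pow,
      Polynomial.coeff_X, Polynomial.coeff_C] at this
    norm_num at this
    exact ⟨g.coeff 2, this⟩
  have hc0 : r ∣ pc := by
    have := key 0
    simp only [Polynomial.coeff_add, Polynomial.coeff_C_mul, Polynomial.coeff_X_pow,
      Polynomial.coeff_X, Polynomial.coeff_C] at this
    norm_num at this
    exact ⟨g.coeff 0, this⟩
  by_contra hu
  obtain ⟨s, hs⟩ := hc2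
  have hXr : (X 1 : SS) ∣ r := by
    rcases prime_X1.irreducible.isUnit_or_isUnit hs with h | h
    · exact absurd h hu
    · obtain ⟨u, rfl⟩ := h
      refine ⟨(u⁻¹ : _), ?_⟩
      rw [show (X 1 : SS) = pa from rfl, hs, mul_assoc]
      simp
  have hX0 : (X 1 : SS) ∣ X 0 ^ 3 := by
    have h1 : (X 1 : SS) ∣ pc := hXr.trans hc0
    have : (X 0 : SS) ^ 3 = pc - X 1 * (3 * X 1 ^ 2 + X 0 * X 1) := by ring
    rw [this]
    exact dvd_sub h1 (Dvd.intro _ rfl)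
  have hX01 : (X 1 : SS) ∣ X 0 := prime_X1.dvd_of_dvd_pow hX0
  have := map_dvd (eval ![1, 0]) hX01
  simp at this

set_option maxHeartbeats 1000000 in
set_option synthInstance.maxHeartbeats 200000 in
lemma pq_irred : Irreducible pq := by
  set K := FractionRing SS
  have hinj : Function.Injective (algebraMap SS K) := IsFractionRing.injective SS K
  apply pq_primitive.irreducible_of_irreducible_map_of_injective hinj
  set A := algebraMap SS K pa
  set B := algebraMap SS K pb
  set Cc := algebraMap SS K pc
  have hA : A ≠ 0 := by
    simp only [A, ne_eq, map_eq_zero_iff _ hinj]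
    exact X_ne_zero 1
  have hmap : pq.map (algebraMap SS K)
      = Polynomial.C A * Polynomial.X ^ 2 + Polynomial.C B * Polynomial.X + Polynomial.C Cc := by
    simp only [Polynomial.map_add, Polynomial.map_mul, Polynomial.map_pow,
      Polynomial.map_C, Polynomial.map_X]
    rfl
  have hdisc : ∀ s : K, discrim A B Cc ≠ s ^ 2 := by
    intro s hs
    have hD : discrim A B Cc = algebraMap SS K (X 0 ^ 4 - 6 * X 0 ^ 3 * X 1
        + X 0 ^ 2 * X 1 ^ 2 - 4 * X 0 * X 1 ^ 3 - 12 * X 1 ^ 4) := by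
      rw [discrim]
      rw [show (X 0 ^ 4 - 6 * X 0 ^ 3 * X 1 + X 0 ^ 2 * X 1 ^ 2 - 4 * X 0 * X 1 ^ 3
          - 12 * X 1 ^ 4 : SS) = pb ^ 2 - 4 * pa * pc by ring]
      rw [map_sub, map_mul, map_mul, map_pow, map_ofNat]
    have hint : IsIntegral SS s := by
      refine ⟨Polynomial.X ^ 2 - Polynomial.C (X 0 ^ 4 - 6 * X 0 ^ 3 * X 1
        + X 0 ^ 2 * X 1 ^ 2 - 4 * X 0 * X 1 ^ 3 - 12 * X 1 ^ 4),
        Polynomial.monic_X_pow_sub_C _ two_ne_zero, ?_⟩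
      simp only [Polynomial.eval₂_sub, Polynomial.eval₂_pow, Polynomial.eval₂_X,
        Polynomial.eval₂_C]
      rw [← hD, hs]
      ring
    obtain ⟨t, ht⟩ := IsIntegrallyClosed.isIntegral_iff.mp hint
    apply aux_D_not_sq t
    apply hinj
    rw [map_mul, ht, ← sq, ← hs, hD]
  have hdeg : (pq.map (algebraMap SS K)).natDegree = 2 := by
    rw [hmap]; exact Polynomial.natDegree_quadratic hA
  have hne : pq.map (algebraMap SS K) ≠ 0 := by
    intro h
    rw [h, Polynomial.natDegree_zero] at hdeg
    norm_num at hdeg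
  rw [Polynomial.irreducible_iff_roots_eq_zero_of_degree_le_three]
  · rw [Multiset.eq_zero_iff_forall_notMem]
    intro x hx
    rw [Polynomial.mem_roots hne, Polynomial.IsRoot.def] at hx
    have hev : Polynomial.eval x (pq.map (algebraMap SS K))
        = A * (x * x) + B * x + Cc := by
      rw [hmap]
      simp only [Polynomial.eval_add, Polynomial.eval_mul, Polynomial.eval_pow,
        Polynomial.eval_C, Polynomial.eval_X]
      ring
    exact quadratic_ne_zero_of_discrim_ne_sq hdisc x (by rw [← hev, hx])
  · rw [hdeg]
  · rw [hdeg]; norm_num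

end Aux

/-- The homogeneous cubic `x₁³ + 3x₂³ + x₀²x₂ − x₀x₁² + x₁x₂² + x₀x₁x₂`
(the plane model equation of `X₀(14)`) is irreducible in `ℂ[x₀, x₁, x₂]`. -/
theorem stmt_10 :
    Irreducible ((X 1) ^ 3 + 3 * (X 2) ^ 3 + (X 0) ^ 2 * (X 2)
        - (X 0) * (X 1) ^ 2 + (X 1) * (X 2) ^ 2 + (X 0) * (X 1) * (X 2) :
      MvPolynomial (Fin 3) ℂ) := by
  rw [← MulEquiv.irreducible_iff (MvPolynomial.finSuccEquiv ℂ 2).toMulEquiv]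
  have h1 : (X 1 : MvPolynomial (Fin 3) ℂ) = X (Fin.succ 0) := rfl
  have h2 : (X 2 : MvPolynomial (Fin 3) ℂ) = X (Fin.succ 1) := rfl
  have key : (MvPolynomial.finSuccEquiv ℂ 2).toMulEquiv
      ((X 1) ^ 3 + 3 * (X 2) ^ 3 + (X 0) ^ 2 * (X 2)
        - (X 0) * (X 1) ^ 2 + (X 1) * (X 2) ^ 2 + (X 0) * (X 1) * (X 2) :
      MvPolynomial (Fin 3) ℂ) = pq := by
    show (MvPolynomial.finSuccEquiv ℂ 2)
      ((X 1) ^ 3 + 3 * (X 2) ^ 3 + (X 0) ^ 2 * (X 2)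
        - (X 0) * (X 1) ^ 2 + (X 1) * (X 2) ^ 2 + (X 0) * (X 1) * (X 2)) = pq
    rw [h1, h2]
    simp only [pq, pa, pb, pc, map_add, map_sub, map_mul, map_pow, map_ofNat,
      finSuccEquiv_X_zero, finSuccEquiv_X_succ, Polynomial.C_mul, Polynomial.C_add,
      Polynomial.C_sub, Polynomial.C_pow, map_ofNat]
    ring
  rw [key]
  exact pq_irred
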